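/- Consider the finite-volume Ising model on the path graph with vertex set {0, 1, …, N} and edges {i, i+1} for 0 ≤ i < N (the one-dimensional Ising chain with free boundary conditions). Then for every inverse temperature β ∈ ℝ and all indices 0 ≤ i ≤ j ≤ N, the two-point correlation function equals ⟨σ(i)·σ(j)⟩_β = (tanh β)^{j−i}. In particular, for every β ≥ 0 the correlations decay exponentially in the distance j − i, so there is no long-range order in dimension one at any positive temperature. -/

import Mathlib

open Finset

noncomputable section

/-- The spin value ±1 associated to a boolean. -/
def spin (b : Bool) : ℝ := if b then 1 else -1

variable {V : Type} [Fintype V] [DecidableEq V]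

/-- The product of the spins at the two endpoints of an (unordered) edge. -/
def edgeSpin (σ : V → Bool) : Sym2 V → ℝ :=
  Sym2.lift ⟨fun v w => spin (σ v) * spin (σ w), fun v w => by ring⟩

/-- The Ising energy: Energy(σ) = −∑_{{v,v'} ∈ E(G)} σ(v)·σ(v'). -/
def energy (G : SimpleGraph V) [DecidableRel G.Adj] (σ : V → Bool) : ℝ :=
  - ∑ e ∈ G.edgeFinset, edgeSpin σ e

/-- The partition function Z(β). -/
def Z (G : SimpleGraph V) [DecidableRel G.Adj] (β : ℝ) : ℝ :=
  ∑ σ : V → Bool, Real.exp (-β * energy G σ)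

/-- The Gibbs probability P_β(σ) = exp(−β·Energy(σ))/Z(β). -/
def gibbsProb (G : SimpleGraph V) [DecidableRel G.Adj] (β : ℝ) (σ : V → Bool) : ℝ :=
  Real.exp (-β * energy G σ) / Z G β

/-- The Gibbs expectation ⟨f⟩_β. -/
def gibbsExp (G : SimpleGraph V) [DecidableRel G.Adj] (β : ℝ) (f : (V → Bool) → ℝ) : ℝ :=
  ∑ σ : V → Bool, gibbsProb G β σ * f σ


/-- The path graph on vertices {0, 1, …, N}, with edges {i, i+1}. -/
def pathG (N : ℕ) : SimpleGraph (Fin (N + 1)) :=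
  SimpleGraph.fromRel (fun i j => (i : ℕ) + 1 = (j : ℕ))

instance (N : ℕ) : DecidableRel (pathG N).Adj := fun a b =>
  decidable_of_iff (a ≠ b ∧ ((a : ℕ) + 1 = (b : ℕ) ∨ (b : ℕ) + 1 = (a : ℕ)))
    (by rw [pathG, SimpleGraph.fromRel_adj])



def bsign (b : Bool) : ℝ := if b then -1 else 1

lemma spin_mul_spin (x y : Bool) : spin x * spin y = bsign (xor x y) := by
  cases x <;> cases y <;> norm_num [spin, bsign]

lemma spin_sq (x : Bool) : spin x * spin x = 1 := by cases x <;> norm_num [spin]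

lemma pathG_edgeFinset (N : ℕ) :
    (pathG N).edgeFinset =
      Finset.image (fun k : Fin N => s(k.castSucc, k.succ)) Finset.univ := by
  ext e
  induction e using Sym2.ind with
  | _ a b =>
    rw [SimpleGraph.mem_edgeFinset, SimpleGraph.mem_edgeSet]
    simp only [SimpleGraph.mem_edgeFinset, SimpleGraph.mem_edgeSet, Finset.mem_image,
      Finset.mem_univ, true_and, pathG, SimpleGraph.fromRel_adj]
    constructor
    · rintro ⟨hne, h | h⟩
      · have hb := b.isLt
        refine ⟨⟨a, by omega⟩, ?_⟩
        rw [Sym2.eq_iff]; left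
        constructor <;> apply Fin.ext <;> simp [Fin.castSucc, h]
      · have hb := a.isLt
        refine ⟨⟨b, by omega⟩, ?_⟩
        rw [Sym2.eq_iff]; right
        constructor <;> apply Fin.ext <;> simp [Fin.castSucc, h]
    · rintro ⟨k, hk⟩
      rw [Sym2.eq_iff] at hk
      have hne : k.castSucc ≠ k.succ := by
        intro h; have := congrArg Fin.val h; simp [Fin.castSucc] at this
      rcases hk with ⟨h1, h2⟩ | ⟨h1, h2⟩ <;> subst h1 <;> subst h2
      · exact ⟨hne, Or.inl (by simp [Fin.castSucc])⟩
      · exact ⟨hne.symm, Or.inr (by simp [Fin.castSucc])⟩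

lemma edge_inj (N : ℕ) : Function.Injective (fun k : Fin N => s(k.castSucc, k.succ)) := by
  intro a c h
  rw [Sym2.eq_iff] at h
  rcases h with ⟨h1, _⟩ | ⟨h1, h2⟩
  · exact Fin.castSucc_injective _ h1
  · have := congrArg Fin.val h1
    have := congrArg Fin.val h2
    simp [Fin.castSucc] at *
    omega

lemma energy_pathG (N : ℕ) (σ : Fin (N + 1) → Bool) :
    energy (pathG N) σ = - ∑ k : Fin N, (spin (σ k.castSucc) * spin (σ k.succ)) := by
  rw [energy, pathG_edgeFinset, Finset.sum_image (fun a _ b _ h => edge_inj N h)]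
  rfl

/-- change of variables -/
def psi (N : ℕ) (σ : Fin (N + 1) → Bool) : Bool × (Fin N → Bool) :=
  (σ 0, fun k => xor (σ k.castSucc) (σ k.succ))

lemma psi_bijective (N : ℕ) : Function.Bijective (psi N) := by
  rw [Fintype.bijective_iff_injective_and_card]
  constructor
  · intro σ σ' h
    have h0 : σ 0 = σ' 0 := congrArg Prod.fst h
    have hb : ∀ k : Fin N, xor (σ k.castSucc) (σ k.succ) = xor (σ' k.castSucc) (σ' k.succ) :=
      fun k => congrFun (congrArg Prod.snd h) k
    funext m
    obtain ⟨m, hm⟩ := m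
    induction m with
    | zero => exact h0
    | succ n ih =>
      have hn : n < N := by omega
      have hn1 : n < N + 1 := by omega
      have ihn := ih hn1
      have := hb ⟨n, hn⟩
      simp only [Fin.castSucc, Fin.succ, Fin.castAdd, Fin.castLE] at this
      rw [ihn] at this
      have : σ ⟨n + 1, hm⟩ = σ' ⟨n + 1, hm⟩ := by
        revert this
        cases σ' ⟨n, hn1⟩ <;> cases σ ⟨n+1, hm⟩ <;> cases σ' ⟨n+1, hm⟩ <;> simp
      exact this
  · simp [pow_succ, mul_comm]

lemma spin_telescope (N : ℕ) (σ : Fin (N + 1) → Bool) (i : Fin (N + 1)) :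
    ∀ m : ℕ, ∀ hm : m < N + 1, (i : ℕ) ≤ m →
      spin (σ i) * spin (σ ⟨m, hm⟩) =
        ∏ k ∈ Finset.univ.filter (fun k : Fin N => (i : ℕ) ≤ (k : ℕ) ∧ (k : ℕ) < m),
          (spin (σ k.castSucc) * spin (σ k.succ)) := by
  intro m
  induction m with
  | zero =>
    intro hm hi
    have hσ : σ ⟨0, hm⟩ = σ i := by congr 1; exact Fin.ext (show (0 : ℕ) = (i : ℕ) by omega)
    rw [hσ, spin_sq]
    rw [Finset.filter_false_of_mem (by intro k _; simp), Finset.prod_empty]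
  | succ n ih =>
    intro hm hi
    rcases Nat.lt_or_ge (i : ℕ) (n + 1) with hlt | hge
    · -- i ≤ n
      have hin : (i : ℕ) ≤ n := by omega
      have hn1 : n < N + 1 := by omega
      have hnN : n < N := by omega
      have hset : Finset.univ.filter (fun k : Fin N => (i : ℕ) ≤ (k : ℕ) ∧ (k : ℕ) < n + 1) =
          insert ⟨n, hnN⟩ (Finset.univ.filter (fun k : Fin N => (i : ℕ) ≤ (k : ℕ) ∧ (k : ℕ) < n)) := by
        ext k
        simp only [Finset.mem_filter, Finset.mem_univ, true_and, Finset.mem_insert]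
        constructor
        · rintro ⟨h1, h2⟩
          rcases Nat.lt_or_ge (k : ℕ) n with h | h
          · exact Or.inr ⟨h1, h⟩
          · exact Or.inl (Fin.ext (show (k : ℕ) = n by omega))
        · rintro (rfl | ⟨h1, h2⟩)
          · exact ⟨hin, Nat.lt_succ_self n⟩
          · exact ⟨h1, by omega⟩
      rw [hset, Finset.prod_insert (by simp)]
      rw [← ih hn1 hin]
      have hc : (⟨n, hnN⟩ : Fin N).castSucc = ⟨n, hn1⟩ := rfl
      have hs : (⟨n, hnN⟩ : Fin N).succ = ⟨n + 1, hm⟩ := rfl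
      rw [hc, hs]
      have hb := spin_sq (σ ⟨n, hn1⟩)
      linear_combination (-(spin (σ i) * spin (σ ⟨n + 1, hm⟩))) * hb
    · -- i = n + 1
      have hσ : σ ⟨n + 1, hm⟩ = σ i := by
        congr 1; exact Fin.ext (show n + 1 = (i : ℕ) by omega)
      rw [hσ, spin_sq]
      rw [Finset.filter_false_of_mem (by intro k _; simp; omega), Finset.prod_empty]

lemma T_card (N : ℕ) (i j : Fin (N + 1)) (hij : i ≤ j) :
    (Finset.univ.filter (fun k : Fin N => (i : ℕ) ≤ (k : ℕ) ∧ (k : ℕ) < (j : ℕ))).card =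
      (j : ℕ) - (i : ℕ) := by
  rw [← Nat.card_Ico (i : ℕ) (j : ℕ)]
  apply Finset.card_nbij (i := Fin.val)
  · intro a ha; simp at ha ⊢; omega
  · exact fun a _ b _ h => Fin.ext h
  · intro m hm
    simp only [Finset.coe_filter, Finset.mem_coe, Finset.mem_Ico, Set.mem_setOf_eq] at hm ⊢
    have hj := j.isLt
    refine ⟨⟨m, by omega⟩, ?_, rfl⟩
    simp; omega

lemma tanh_lt_one' (x : ℝ) : Real.tanh x < 1 := by
  rw [Real.tanh_eq_sinh_div_cosh, div_lt_one (Real.cosh_pos x)]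
  exact Real.sinh_lt_cosh x

lemma tanh_nonneg' {x : ℝ} (h : 0 ≤ x) : 0 ≤ Real.tanh x := by
  rw [Real.tanh_eq_sinh_div_cosh]
  refine div_nonneg ?_ (Real.cosh_pos x).le
  rw [Real.sinh_eq]
  have := Real.exp_le_exp.2 (by linarith : -x ≤ x)
  linarith

/-- The master factorized sum. -/
lemma master_sum (N : ℕ) (β : ℝ) (P : Fin N → Prop) [DecidablePred P] :
    ∑ σ : Fin (N + 1) → Bool, Real.exp (-β * energy (pathG N) σ) *
        ∏ k ∈ Finset.univ.filter P, (spin (σ k.castSucc) * spin (σ k.succ)) =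
      2 * ∏ k : Fin N, (if P k then 2 * Real.sinh β else 2 * Real.cosh β) := by
  have key : ∀ σ : Fin (N + 1) → Bool,
      Real.exp (-β * energy (pathG N) σ) *
          ∏ k ∈ Finset.univ.filter P, (spin (σ k.castSucc) * spin (σ k.succ)) =
        ∏ k : Fin N, (Real.exp (β * bsign ((psi N σ).2 k)) *
          (if P k then bsign ((psi N σ).2 k) else 1)) := by
    intro σ
    have hb : ∀ k : Fin N, spin (σ k.castSucc) * spin (σ k.succ) = bsign ((psi N σ).2 k) :=
      fun k => spin_mul_spin _ _
    rw [energy_pathG, neg_mul_neg, Finset.mul_sum, Real.exp_sum, Finset.prod_filter,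
      ← Finset.prod_mul_distrib]
    exact Finset.prod_congr rfl fun k _ => by rw [hb k]
  rw [Fintype.sum_bijective (psi N) (psi_bijective N) _
    (fun p : Bool × (Fin N → Bool) => ∏ k : Fin N, (Real.exp (β * bsign (p.2 k)) *
      (if P k then bsign (p.2 k) else 1))) key]
  rw [Fintype.sum_prod_type]
  have inner : ∀ s : Bool,
      (∑ b : Fin N → Bool, ∏ k : Fin N, (Real.exp (β * bsign (b k)) *
          (if P k then bsign (b k) else 1))) =
        ∏ k : Fin N, (if P k then 2 * Real.sinh β else 2 * Real.cosh β) := by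
    intro s
    rw [← Fintype.piFinset_univ]
    refine Eq.trans (Finset.prod_univ_sum (fun _ => (Finset.univ : Finset Bool))
      (fun k x => Real.exp (β * bsign x) * if P k then bsign x else 1)).symm ?_
    refine Finset.prod_congr rfl fun k _ => ?_
    rw [Fintype.sum_bool]
    by_cases hP : P k <;> simp only [hP, if_true, if_false, bsign] <;> norm_num
    · rw [Real.sinh_eq]; ring
    · rw [Real.cosh_eq]; ring
  rw [Fintype.sum_bool, inner true]
  ring

lemma Z_pathG (N : ℕ) (β : ℝ) :
    Z (pathG N) β = 2 * (2 * Real.cosh β) ^ N := by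
  have h := master_sum N β (fun _ => False)
  simp only [Finset.filter_false, Finset.prod_empty, mul_one, if_false] at h
  rw [Z, h, Finset.prod_const, Finset.card_univ, Fintype.card_fin]


/-- The two-point function of the one-dimensional Ising chain with free boundary
conditions: ⟨σ(i)σ(j)⟩_β = (tanh β)^{j−i}.  In particular, for β ≥ 0 the correlations
are bounded by (tanh β)^{j−i} with tanh β < 1, i.e. they decay exponentially in the
distance: there is no long-range order in dimension one at any positive temperature. -/
theorem ising_chain_two_point (N : ℕ) (β : ℝ) (i j : Fin (N + 1)) (hij : i ≤ j) :
    gibbsExp (pathG N) β (fun σ => spin (σ i) * spin (σ j)) =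
      Real.tanh β ^ ((j : ℕ) - (i : ℕ)) ∧
    (0 ≤ β →
      |gibbsExp (pathG N) β (fun σ => spin (σ i) * spin (σ j))| ≤
        Real.tanh β ^ ((j : ℕ) - (i : ℕ)) ∧ Real.tanh β < 1) := by
  have hj := j.isLt
  have hij' : (i : ℕ) ≤ (j : ℕ) := hij
  have hcosh := Real.cosh_pos β
  have hZ : Z (pathG N) β = 2 * (2 * Real.cosh β) ^ N := Z_pathG N β
  have hZne : Z (pathG N) β ≠ 0 := by rw [hZ]; positivity
  have hnum : ∑ σ : Fin (N + 1) → Bool, Real.exp (-β * energy (pathG N) σ) *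
        (spin (σ i) * spin (σ j)) =
      2 * ∏ k : Fin N,
        (if (i : ℕ) ≤ (k : ℕ) ∧ (k : ℕ) < (j : ℕ) then 2 * Real.sinh β else 2 * Real.cosh β) := by
    rw [← master_sum N β (fun k : Fin N => (i : ℕ) ≤ (k : ℕ) ∧ (k : ℕ) < (j : ℕ))]
    refine Finset.sum_congr rfl fun σ _ => ?_
    congr 1
    have hjj : σ j = σ ⟨(j : ℕ), hj⟩ := rfl
    rw [hjj, spin_telescope N σ i (j : ℕ) hj hij']
  have hmain : gibbsExp (pathG N) β (fun σ => spin (σ i) * spin (σ j)) =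
      Real.tanh β ^ ((j : ℕ) - (i : ℕ)) := by
    rw [gibbsExp]
    simp only [gibbsProb, div_mul_eq_mul_div, ← Finset.sum_div]
    rw [hnum, hZ, mul_div_mul_left _ _ (two_ne_zero)]
    have hpow : (2 * Real.cosh β) ^ N = ∏ _k : Fin N, (2 * Real.cosh β) := by
      rw [Finset.prod_const, Finset.card_univ, Fintype.card_fin]
    rw [hpow, ← Finset.prod_div_distrib]
    have hterm : ∀ k : Fin N,
        (if (i : ℕ) ≤ (k : ℕ) ∧ (k : ℕ) < (j : ℕ) then 2 * Real.sinh β else 2 * Real.cosh β) /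
            (2 * Real.cosh β) =
          if (i : ℕ) ≤ (k : ℕ) ∧ (k : ℕ) < (j : ℕ) then Real.tanh β else 1 := by
      intro k
      split_ifs with h
      · rw [mul_div_mul_left _ _ (two_ne_zero), Real.tanh_eq_sinh_div_cosh]
      · exact div_self (by positivity)
    rw [Finset.prod_congr rfl fun k _ => hterm k,
      ← Finset.prod_filter (fun k : Fin N => (i : ℕ) ≤ (k : ℕ) ∧ (k : ℕ) < (j : ℕ))
        (fun _ => Real.tanh β),
      Finset.prod_const, T_card N i j hij]
  refine ⟨hmain, fun hβ => ⟨?_, tanh_lt_one' β⟩⟩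
  rw [hmain, abs_of_nonneg (pow_nonneg (tanh_nonneg' hβ) _)]
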